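/- arXiv:2311.08632 — 2 statements merged into one kernel-verified Lean document; each statement's English description precedes it below -/
import Mathlib

section
/- Let α be a Perron number of degree r with conjugates α1 = α, ..., αr. If κ, η ∈ N^{r-1} satisfy s_κ = s_η, then the vector (−|κ|+|η|, κ2−η2, ..., κr−ηr) lies in R_α ∩ H_0, i.e., α1^{-|κ|+|η|} · ∏_{i=2}^r αi^{κi−ηi} = 1. -/
/-- `α` together with `b` forms the system of conjugates of a Perron number of degree `n+1`:
`α` is a real algebraic integer, `1 < α`, all other conjugates `b i` have modulus `< α`. -/
def IsPerronSystem (n : ℕ) (α : ℝ) (b : Fin n → ℂ) : Prop :=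
  1 < α ∧ (∀ i, ‖b i‖ < α) ∧
  ∃ p : Polynomial ℤ, p.Monic ∧ Irreducible p ∧ p.natDegree = n + 1 ∧
    (p.map (Int.castRingHom ℂ)).roots = (α : ℂ) ::ₘ Multiset.map b Finset.univ.val

/-- The candidate pole `s_κ` associated to a multi-index `κ`. -/
noncomputable def sPole {n : ℕ} (α : ℝ) (b : Fin n → ℂ) (κ : Fin n → ℕ) : ℂ :=
  -(∑ i, (κ i : ℂ)) +
    ((Real.log ‖∏ i, b i ^ κ i‖ / Real.log α : ℝ) : ℂ) +
    Complex.I * (((∏ i, b i ^ κ i).arg / Real.log α : ℝ) : ℂ)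

/-- If `s_κ = s_η`, then the vector `(−|κ|+|η|, κ−η)` lies in `R_α ∩ H_0`, i.e.
`α^(−|κ|+|η|) · ∏ αi^(κi−ηi) = 1`. -/
theorem relation_of_sPole_eq (n : ℕ) (α : ℝ) (b : Fin n → ℂ)
    (h : IsPerronSystem n α b) (κ η : Fin n → ℕ)
    (heq : sPole α b κ = sPole α b η) :
    (α : ℂ) ^ (-(∑ i, (κ i : ℤ)) + ∑ i, (η i : ℤ)) *
      ∏ i, b i ^ ((κ i : ℤ) - (η i : ℤ)) = 1 := by
  obtain ⟨hα, -, p, hmonic, hirr, hdeg, hroots⟩ := h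
  have hαpos : (0:ℝ) < α := lt_trans one_pos hα
  have hlog : 0 < Real.log α := Real.log_pos hα
  have hb : ∀ i, b i ≠ 0 := by
    intro i hbi
    have h0 : (0 : ℂ) ∈ (p.map (Int.castRingHom ℂ)).roots := by
      rw [hroots]
      exact Multiset.mem_cons_of_mem (Multiset.mem_map.2 ⟨i, Finset.mem_univ i, hbi⟩)
    have hroot := Polynomial.isRoot_of_mem_roots h0
    have hc0 : p.coeff 0 = 0 := by
      have h1 : ((p.coeff 0 : ℤ) : ℂ) = 0 := by
        have := hroot
        rw [Polynomial.IsRoot, ← Polynomial.coeff_zero_eq_eval_zero, Polynomial.coeff_map] at this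
        simpa using this
      exact_mod_cast h1
    obtain ⟨q, hq⟩ := Polynomial.X_dvd_iff.2 hc0
    rcases hirr.isUnit_or_isUnit hq with hu | hu
    · exact Polynomial.not_isUnit_X hu
    · have hq0 : q ≠ 0 := hu.ne_zero
      have hd1 : p.natDegree = 1 := by
        rw [hq, Polynomial.natDegree_mul Polynomial.X_ne_zero hq0,
          Polynomial.natDegree_X, Polynomial.natDegree_eq_zero_of_isUnit hu]
      have := i.isLt
      omega
  set Pκ := ∏ i, b i ^ κ i with hPκdef
  set Pη := ∏ i, b i ^ η i with hPηdef
  have hPκ0 : Pκ ≠ 0 := Finset.prod_ne_zero_iff.2 fun i _ => pow_ne_zero _ (hb i)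
  have hPη0 : Pη ≠ 0 := Finset.prod_ne_zero_iff.2 fun i _ => pow_ne_zero _ (hb i)
  simp only [sPole, Complex.ext_iff, Complex.add_re, Complex.add_im, Complex.neg_re,
    Complex.neg_im, Complex.ofReal_re, Complex.ofReal_im, Complex.mul_re, Complex.mul_im,
    Complex.I_re, Complex.I_im, Complex.re_sum, Complex.im_sum, Complex.natCast_re,
    Complex.natCast_im] at heq
  obtain ⟨hre, him⟩ := heq
  have harg : Pκ.arg = Pη.arg := by
    field_simp [hlog.ne'] at him
    simpa using him
  have habs : ‖Pκ‖ * α ^ (-(∑ i, (κ i:ℤ))) = ‖Pη‖ * α ^ (-(∑ i, (η i:ℤ))) := by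
    have hlκ : (0:ℝ) < ‖Pκ‖ := norm_pos_iff.2 hPκ0
    have hlη : (0:ℝ) < ‖Pη‖ := norm_pos_iff.2 hPη0
    have hlogeq : Real.log (‖Pκ‖ * α ^ (-(∑ i, (κ i:ℤ))))
        = Real.log (‖Pη‖ * α ^ (-(∑ i, (η i:ℤ)))) := by
      rw [Real.log_mul hlκ.ne' (by positivity), Real.log_mul hlη.ne' (by positivity),
        Real.log_zpow, Real.log_zpow]
      push_cast
      field_simp [hlog.ne'] at hre
      have e1 : (∏ x, ‖b x‖ ^ κ x) = ‖Pκ‖ := by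
        rw [hPκdef]; simp [norm_prod, norm_pow]
      have e2 : (∏ x, ‖b x‖ ^ η x) = ‖Pη‖ := by
        rw [hPηdef]; simp [norm_prod, norm_pow]
      rw [← hPκdef, ← hPηdef] at hre
      linarith
    have h1 : (0:ℝ) < ‖Pκ‖ * α ^ (-(∑ i, (κ i:ℤ))) := by positivity
    have h2 : (0:ℝ) < ‖Pη‖ * α ^ (-(∑ i, (η i:ℤ))) := by positivity
    exact Real.log_injOn_pos (Set.mem_Ioi.2 h1) (Set.mem_Ioi.2 h2) hlogeq
  set A : ℂ := ((α ^ (-(∑ i, (κ i:ℤ))) : ℝ) : ℂ) * Pκ with hAdef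
  set B : ℂ := ((α ^ (-(∑ i, (η i:ℤ))) : ℝ) : ℂ) * Pη with hBdef
  have hAB : A = B := by
    apply Complex.ext_norm_arg
    · rw [hAdef, hBdef, norm_mul, norm_mul, Complex.norm_real, Complex.norm_real, Real.norm_eq_abs, Real.norm_eq_abs,
        abs_of_pos (by positivity), abs_of_pos (by positivity)]
      linarith [habs]
    · rw [hAdef, hBdef, Complex.arg_real_mul _ (by positivity),
        Complex.arg_real_mul _ (by positivity), harg]
  have hαc : (α:ℂ) ≠ 0 := by exact_mod_cast hαpos.ne'
  have hB0 : B ≠ 0 := mul_ne_zero (by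
    simp only [Ne, Complex.ofReal_eq_zero]; positivity) hPη0
  have hprod : (∏ i, b i ^ ((κ i:ℤ) - (η i:ℤ))) = Pκ / Pη := by
    rw [hPκdef, hPηdef, ← Finset.prod_div_distrib]
    exact Finset.prod_congr rfl fun i _ => by
      rw [zpow_sub₀ (hb i), zpow_natCast, zpow_natCast]
  rw [hprod, show (-(∑ i, (κ i:ℤ)) + ∑ i, (η i:ℤ)) = -(∑ i, (κ i:ℤ)) - -(∑ i, (η i:ℤ)) from by
    ring, zpow_sub₀ hαc]
  have hA' : (α:ℂ) ^ (-(∑ i, (κ i:ℤ))) * Pκ = A := by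
    rw [hAdef]; push_cast; ring
  have hB' : (α:ℂ) ^ (-(∑ i, (η i:ℤ))) * Pη = B := by
    rw [hBdef]; push_cast; ring
  rw [div_mul_div_comm, hA', hB', hAB, div_self hB0]
end

section
/- Let α be a Perron number of degree r and ι: N^{r-1} → C the pole enumeration map κ ↦ s_κ. Then the fibre of ι over 0 consists of exactly one element, namely the zero multi-index: #ι^{-1}({0}) = 1. -/
/-- The fibre of the pole enumeration map over `0` consists exactly of the zero
multi-index. -/
theorem fibre_at_zero (n : ℕ) (α : ℝ) (b : Fin n → ℂ)
    (h : IsPerronSystem n α b) :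
    {κ : Fin n → ℕ | sPole α b κ = 0} = {0} := by
  obtain ⟨hα, hb, -⟩ := h
  have hlogα : 0 < Real.log α := Real.log_pos hα
  ext κ
  simp only [Set.mem_setOf_eq, Set.mem_singleton_iff]
  constructor
  · intro hκ
    by_contra hne
    have hS : 0 < ∑ i, κ i := by
      rcases Nat.eq_zero_or_pos (∑ i, κ i) with h0 | h0
      · exact absurd (funext fun i =>
          Finset.sum_eq_zero_iff.mp h0 i (Finset.mem_univ i)) hne
      · exact h0
    have habs : ‖∏ i, b i ^ κ i‖
        = ∏ i, ‖b i‖ ^ κ i := by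
      simp [norm_prod, norm_pow]
    have hre := congrArg Complex.re hκ
    simp only [sPole, Complex.add_re, Complex.neg_re, Complex.ofReal_re,
      Complex.mul_re, Complex.I_re, Complex.I_im, Complex.ofReal_im,
      Complex.zero_re, Complex.re_sum, Complex.natCast_re, habs] at hre
    have hre' : -(∑ i, (κ i : ℝ))
        + Real.log (∏ i, ‖b i‖ ^ κ i) / Real.log α = 0 := by
      linarith [hre]
    have heq : Real.log (∏ i, ‖b i‖ ^ κ i)
        = (∑ i, (κ i : ℝ)) * Real.log α := by
      have := hre'
      field_simp at this
      linarith [this]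
    have hSpos : (0:ℝ) < ∑ i, (κ i : ℝ) := by
      have : (0:ℝ) < ((∑ i, κ i : ℕ) : ℝ) := by exact_mod_cast hS
      simpa [Nat.cast_sum] using this
    have hlt : Real.log (∏ i, ‖b i‖ ^ κ i)
        < (∑ i, (κ i : ℝ)) * Real.log α := by
      by_cases hz : ∃ i, κ i ≠ 0 ∧ b i = 0
      · obtain ⟨i, hκi, hbi⟩ := hz
        have h0 : (∏ i, ‖b i‖ ^ κ i) = 0 :=
          Finset.prod_eq_zero (Finset.mem_univ i) (by simp [hbi, hκi])
        rw [h0, Real.log_zero]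
        positivity
      · push_neg at hz
        rw [Real.log_prod (fun i _ => ?_)]
        · simp only [Real.log_pow]
          rw [Finset.sum_mul]
          obtain ⟨i₀, hi₀⟩ : ∃ i, κ i ≠ 0 := by
            by_contra hc
            push_neg at hc
            exact hne (funext hc)
          refine Finset.sum_lt_sum (fun i _ => ?_) ⟨i₀, Finset.mem_univ i₀, ?_⟩
          · have hlog : Real.log (‖b i‖) ≤ Real.log α := by
              rcases eq_or_lt_of_le (norm_nonneg (b i)) with h0 | h0
              · rw [← h0, Real.log_zero]; exact le_of_lt hlogα
              · exact le_of_lt (Real.log_lt_log h0 (hb i))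
            exact mul_le_mul_of_nonneg_left hlog (by positivity)
          · have hlog : Real.log (‖b i₀‖) < Real.log α := by
              rcases eq_or_lt_of_le (norm_nonneg (b i₀)) with h0 | h0
              · rw [← h0, Real.log_zero]; exact hlogα
              · exact Real.log_lt_log h0 (hb i₀)
            have hp : (0:ℝ) < (κ i₀ : ℝ) := by
              exact_mod_cast Nat.pos_of_ne_zero hi₀
            exact (mul_lt_mul_iff_right₀ hp).mpr hlog
        · by_cases hκi : κ i = 0
          · simp [hκi]
          · exact pow_ne_zero _ (by simpa using hz i hκi)
    exact absurd heq (ne_of_lt hlt)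
  · rintro rfl
    simp [sPole]
end
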